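/- Let γ: ℝ → ℝ³ be a C^ω, l-periodic, unit-speed curve (‖γ'(t)‖ = 1 for all t) that is injective on [0,l), such that ‖γ''(t)‖ = κ₀ for all t for some constant κ₀ > 0, and such that det(γ'(t), γ''(t), γ'''(t)) = c₀ for all t for some constant c₀ (so that γ has constant curvature and constant torsion). Then c₀ = 0 and the image of γ is a circle contained in a plane of ℝ³. -/

import Mathlib

noncomputable section

/-- Euclidean 3-space. -/
abbrev R3 : Type := EuclideanSpace ℝ (Fin 3)

/-- The determinant `det(a, b, c)` of three vectors of `ℝ³`. -/
def det3 (a b c : R3) : ℝ :=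
  a 0 * (b 1 * c 2 - b 2 * c 1) - a 1 * (b 0 * c 2 - b 2 * c 0)
    + a 2 * (b 0 * c 1 - b 1 * c 0)

/-- Cross product on `ℝ³`. -/
def cross3 (a b : R3) : R3 :=
  (WithLp.equiv 2 (Fin 3 → ℝ)).symm
    ![a 1 * b 2 - a 2 * b 1, a 2 * b 0 - a 0 * b 2, a 0 * b 1 - a 1 * b 0]

lemma inner3 (a b : R3) : (inner ℝ a b : ℝ) = a 0 * b 0 + a 1 * b 1 + a 2 * b 2 := by
  simp [PiLp.inner_apply, Fin.sum_univ_three, RCLike.inner_apply]; ring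

lemma cross3_0 (a b : R3) : cross3 a b 0 = a 1 * b 2 - a 2 * b 1 := rfl
lemma cross3_1 (a b : R3) : cross3 a b 1 = a 2 * b 0 - a 0 * b 2 := rfl
lemma cross3_2 (a b : R3) : cross3 a b 2 = a 0 * b 1 - a 1 * b 0 := rfl

/-- The fundamental vector identity in `ℝ³`. -/
lemma key3 (u v w : R3) :
    ((inner ℝ u u : ℝ) * inner ℝ v v - (inner ℝ u v : ℝ) * inner ℝ u v) • w =
      ((inner ℝ w u : ℝ) * inner ℝ v v - (inner ℝ w v : ℝ) * inner ℝ u v) • u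
      + ((inner ℝ w v : ℝ) * inner ℝ u u - (inner ℝ w u : ℝ) * inner ℝ u v) • v
      + det3 u v w • cross3 u v := by
  ext i
  fin_cases i <;>
    simp only [Fin.zero_eta, Fin.mk_one, Fin.reduceFinMk, inner3, det3, cross3_0, cross3_1,
      cross3_2, PiLp.smul_apply, PiLp.add_apply, smul_eq_mul] <;> ring

lemma inner_cross3 (a b c : R3) : (inner ℝ c (cross3 a b) : ℝ) = det3 a b c := by
  simp only [inner3, det3, cross3_0, cross3_1, cross3_2]; ring

lemma inner_cross3_left (a b : R3) : (inner ℝ a (cross3 a b) : ℝ) = 0 := by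
  simp only [inner3, cross3_0, cross3_1, cross3_2]; ring

lemma inner_cross3_right (a b : R3) : (inner ℝ b (cross3 a b) : ℝ) = 0 := by
  simp only [inner3, cross3_0, cross3_1, cross3_2]; ring

lemma det3_dup12 (a b : R3) : det3 a a b = 0 := by simp only [det3]; ring
lemma det3_dup23 (a b : R3) : det3 a b b = 0 := by simp only [det3]; ring

lemma det3_cross (a b : R3) :
    det3 a b (cross3 a b) = (inner ℝ a a : ℝ) * inner ℝ b b - (inner ℝ a b : ℝ) * inner ℝ a b := by
  simp only [det3, cross3_0, cross3_1, cross3_2, inner3]; ring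

lemma hasDerivAt_proj {f : ℝ → R3} {f' : R3} {t : ℝ} (hf : HasDerivAt f f' t) (i : Fin 3) :
    HasDerivAt (fun s => f s i) (f' i) t :=
  (EuclideanSpace.proj (𝕜 := ℝ) i).hasFDerivAt.comp_hasDerivAt t hf

lemma hasDerivAt_det3 {f g h : ℝ → R3} {f' g' h' : R3} {t : ℝ}
    (hf : HasDerivAt f f' t) (hg : HasDerivAt g g' t) (hh : HasDerivAt h h' t) :
    HasDerivAt (fun s => det3 (f s) (g s) (h s))
      (det3 f' (g t) (h t) + det3 (f t) g' (h t) + det3 (f t) (g t) h') t := by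
  have F := fun i => hasDerivAt_proj hf i
  have G := fun i => hasDerivAt_proj hg i
  have H := fun i => hasDerivAt_proj hh i
  have key := (((F 0).mul (((G 1).mul (H 2)).sub ((G 2).mul (H 1)))).sub
      ((F 1).mul (((G 0).mul (H 2)).sub ((G 2).mul (H 0))))).add
      ((F 2).mul (((G 0).mul (H 1)).sub ((G 1).mul (H 0))))
  have e : (fun s => det3 (f s) (g s) (h s)) = fun s =>
      f s 0 * (g s 1 * h s 2 - g s 2 * h s 1) - f s 1 * (g s 0 * h s 2 - g s 2 * h s 0)
        + f s 2 * (g s 0 * h s 1 - g s 1 * h s 0) := rfl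
  rw [e]
  refine key.congr_deriv (Eq.symm ?_)
  simp only [det3, Pi.mul_apply, Pi.sub_apply]; ring

lemma exists_cos_sin (p q : ℝ) (h : p ^ 2 + q ^ 2 = 1) :
    ∃ θ, Real.cos θ = p ∧ Real.sin θ = q := by
  have hp0 : -1 ≤ p := by nlinarith [sq_nonneg q]
  have hp1 : p ≤ 1 := by nlinarith [sq_nonneg q]
  have hs : Real.sin (Real.arccos p) = Real.sqrt (1 - p ^ 2) := Real.sin_arccos p
  have h1 : (1 - p ^ 2) = q ^ 2 := by linarith
  rcases le_or_gt 0 q with hq | hq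
  · exact ⟨Real.arccos p, Real.cos_arccos hp0 hp1, by rw [hs, h1, Real.sqrt_sq hq]⟩
  · exact ⟨-Real.arccos p, by rw [Real.cos_neg]; exact Real.cos_arccos hp0 hp1,
      by rw [Real.sin_neg, hs, h1, Real.sqrt_sq_eq_abs, abs_of_neg hq, neg_neg]⟩

/-- derivative of a constant function is zero (pointwise form). -/
lemma deriv_of_const {φ : ℝ → ℝ} {d : ℝ} {t : ℝ} (c : ℝ)
    (hd : HasDerivAt φ d t) (hc : ∀ s, φ s = c) : d = 0 := by
  have h2 : HasDerivAt (fun _ : ℝ => c) d t := by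
    have e : φ = fun _ => c := funext hc
    rwa [e] at hd
  simpa using h2.unique (hasDerivAt_const t c)

set_option maxHeartbeats 1000000 in
theorem constant_curvature_torsion_closed_curve_is_circle
    (l : ℝ) (hl : 0 < l) (γ : ℝ → R3)
    (hγ : ∀ t, AnalyticAt ℝ γ t) (hper : ∀ t, γ (t + l) = γ t)
    (hinj : Set.InjOn γ (Set.Ico 0 l)) (hunit : ∀ t, ‖deriv γ t‖ = 1)
    (κ₀ : ℝ) (hκ₀ : 0 < κ₀) (hκ : ∀ t, ‖deriv (deriv γ) t‖ = κ₀)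
    (c₀ : ℝ)
    (hτ : ∀ t, det3 (deriv γ t) (deriv (deriv γ) t) (deriv (deriv (deriv γ)) t) = c₀) :
    c₀ = 0 ∧ ∃ (center w : R3) (r : ℝ), w ≠ 0 ∧ 0 < r ∧
      Set.range γ =
        {x : R3 | inner ℝ (x - center) w = (0 : ℝ) ∧ ‖x - center‖ = r} := by
  have hκ2 : (0:ℝ) < κ₀ ^ 2 := by positivity
  set T := deriv γ with hTdef
  set N := deriv T with hNdef
  set J := deriv N with hJdef
  set K := deriv J with hKdef
  -- analyticity and differentiability
  have hA0 : AnalyticOnNhd ℝ γ Set.univ := fun t _ => hγ t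
  have hA1 : AnalyticOnNhd ℝ T Set.univ := by rw [hTdef]; exact hA0.deriv
  have hA2 : AnalyticOnNhd ℝ N Set.univ := by rw [hNdef]; exact hA1.deriv
  have hA3 : AnalyticOnNhd ℝ J Set.univ := by rw [hJdef]; exact hA2.deriv
  have hdγ : ∀ t, HasDerivAt γ (T t) t := fun t =>
    (hA0 t trivial).differentiableAt.hasDerivAt
  have hdT : ∀ t, HasDerivAt T (N t) t := fun t =>
    (hA1 t trivial).differentiableAt.hasDerivAt
  have hdN : ∀ t, HasDerivAt N (J t) t := fun t =>
    (hA2 t trivial).differentiableAt.hasDerivAt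
  have hdJ : ∀ t, HasDerivAt J (K t) t := fun t =>
    (hA3 t trivial).differentiableAt.hasDerivAt
  -- basic inner ℝ product identities
  have iTT : ∀ t, (inner ℝ (T t) (T t) : ℝ) = 1 := fun t => by
    rw [real_inner_self_eq_norm_sq, hunit]; norm_num
  have iNN : ∀ t, (inner ℝ (N t) (N t) : ℝ) = κ₀ ^ 2 := fun t => by
    rw [real_inner_self_eq_norm_sq, hκ]
  have iTN : ∀ t, (inner ℝ (T t) (N t) : ℝ) = 0 := by
    intro t
    have hd := HasDerivAt.inner ℝ (hdT t) (hdT t)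
    have h0 := deriv_of_const 1 hd iTT
    have := real_inner_comm (T t) (N t)
    linarith [this ▸ h0]
  have iNT : ∀ t, (inner ℝ (N t) (T t) : ℝ) = 0 := fun t => by
    rw [real_inner_comm]; exact iTN t
  have iJN : ∀ t, (inner ℝ (J t) (N t) : ℝ) = 0 := by
    intro t
    have hd := HasDerivAt.inner ℝ (hdN t) (hdN t)
    have h0 := deriv_of_const (κ₀ ^ 2) hd iNN
    have := real_inner_comm (N t) (J t)
    linarith [this ▸ h0]
  have iNJ : ∀ t, (inner ℝ (N t) (J t) : ℝ) = 0 := fun t => by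
    rw [real_inner_comm]; exact iJN t
  have iJT : ∀ t, (inner ℝ (J t) (T t) : ℝ) = -(κ₀ ^ 2) := by
    intro t
    have hd := HasDerivAt.inner ℝ (hdT t) (hdN t)
    have h0 := deriv_of_const 0 hd iTN
    have h1 := iNN t
    have h2 := real_inner_comm (J t) (T t)
    linarith
  have iTJ : ∀ t, (inner ℝ (T t) (J t) : ℝ) = -(κ₀ ^ 2) := fun t => by
    rw [real_inner_comm]; exact iJT t
  -- the expression for J
  have hJexp : ∀ t, (κ₀ ^ 2) • J t = (-(κ₀ ^ 4)) • T t + c₀ • cross3 (T t) (N t) := by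
    intro t
    have h := key3 (T t) (N t) (J t)
    rw [iTT t, iNN t, iTN t, iJT t, iJN t, hτ t] at h
    have e1 : ((1:ℝ) * κ₀ ^ 2 - 0 * 0) = κ₀ ^ 2 := by ring
    rw [e1] at h
    rw [h]
    have e2 : (-(κ₀ ^ 2) * κ₀ ^ 2 - (0:ℝ) * 0) = -(κ₀ ^ 4) := by ring
    have e3 : ((0:ℝ) * 1 - -(κ₀ ^ 2) * 0) = 0 := by ring
    rw [e2, e3, zero_smul, add_zero]
  have iJJ : ∀ t, (inner ℝ (J t) (J t) : ℝ) = κ₀ ^ 4 + c₀ ^ 2 / κ₀ ^ 2 := by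
    intro t
    have h := congrArg (fun y : R3 => (inner ℝ (J t) y : ℝ)) (hJexp t)
    simp only [real_inner_smul_right, inner_add_right] at h
    rw [iJT t, inner_cross3, hτ t] at h
    have hne : (κ₀ ^ 2) ≠ 0 := ne_of_gt hκ2
    field_simp at h ⊢
    nlinarith [h]
  -- second derivatives of the inner ℝ identities
  have iKN : ∀ t, (inner ℝ (K t) (N t) : ℝ) = -(κ₀ ^ 4 + c₀ ^ 2 / κ₀ ^ 2) := by
    intro t
    have hd := HasDerivAt.inner ℝ (hdJ t) (hdN t)
    have h0 := deriv_of_const 0 hd iJN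
    have h1 := iJJ t
    linarith
  have iKT : ∀ t, (inner ℝ (K t) (T t) : ℝ) = 0 := by
    intro t
    have hd := HasDerivAt.inner ℝ (hdJ t) (hdT t)
    have h0 := deriv_of_const (-(κ₀ ^ 2)) hd iJT
    have h1 := iJN t
    have h2 := real_inner_comm (J t) (N t)
    linarith
  have dTNK : ∀ t, det3 (T t) (N t) (K t) = 0 := by
    intro t
    have hd := hasDerivAt_det3 (hdT t) (hdN t) (hdJ t)
    have h0 := deriv_of_const c₀ hd hτ
    rw [det3_dup12, det3_dup23] at h0
    linarith
  -- the frequency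
  set ω : ℝ := Real.sqrt (κ₀ ^ 2 + c₀ ^ 2 / κ₀ ^ 4) with hωdef
  have hE2pos : (0:ℝ) < κ₀ ^ 2 + c₀ ^ 2 / κ₀ ^ 4 := by positivity
  have hω2 : ω ^ 2 = κ₀ ^ 2 + c₀ ^ 2 / κ₀ ^ 4 := Real.sq_sqrt hE2pos.le
  have hωpos : (0:ℝ) < ω := Real.sqrt_pos.2 hE2pos
  have hωne : ω ≠ 0 := ne_of_gt hωpos
  have hE2eq : κ₀ ^ 2 * ω ^ 2 = κ₀ ^ 4 + c₀ ^ 2 / κ₀ ^ 2 := by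
    rw [hω2]; field_simp
  -- the fourth-order ODE : K = -ω² N
  have hKeq : ∀ t, K t = (-(ω ^ 2)) • N t := by
    intro t
    have h := key3 (T t) (N t) (K t)
    rw [iTT t, iNN t, iTN t, iKT t, iKN t, dTNK t] at h
    have e1 : ((1:ℝ) * κ₀ ^ 2 - 0 * 0) = κ₀ ^ 2 := by ring
    have e2 : ((0:ℝ) * κ₀ ^ 2 - -(κ₀ ^ 4 + c₀ ^ 2 / κ₀ ^ 2) * 0) = 0 := by ring
    have e3 : (-(κ₀ ^ 4 + c₀ ^ 2 / κ₀ ^ 2) * 1 - (0:ℝ) * 0) = κ₀ ^ 2 * (-(ω ^ 2)) := by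
      rw [← hE2eq]; ring
    rw [e1, e2, e3, zero_smul, zero_add, zero_smul, add_zero] at h
    have := congrArg (fun y : R3 => (κ₀ ^ 2)⁻¹ • y) h
    simpa [smul_smul, ne_of_gt hκ2, inv_mul_cancel₀ (ne_of_gt hκ2)] using this
  -- solve the ODE for N by the energy method
  have hlin : ∀ t : ℝ, HasDerivAt (fun s : ℝ => ω * s) ω t := fun t => by
    simpa using (hasDerivAt_id t).const_mul ω
  have hcos : ∀ t, HasDerivAt (fun s => Real.cos (ω * s)) (-Real.sin (ω * t) * ω) t :=
    fun t => by simpa [Function.comp_def] using (Real.hasDerivAt_cos (ω * t)).comp t (hlin t)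
  have hsin : ∀ t, HasDerivAt (fun s => Real.sin (ω * s)) (Real.cos (ω * t) * ω) t :=
    fun t => by simpa [Function.comp_def] using (Real.hasDerivAt_sin (ω * t)).comp t (hlin t)
  have hdu : ∀ t, HasDerivAt
      (fun s => N s - Real.cos (ω * s) • N 0 - (Real.sin (ω * s) / ω) • J 0)
      (J t + (ω * Real.sin (ω * t)) • N 0 - Real.cos (ω * t) • J 0) t := by
    intro t
    have h := ((hdN t).sub ((hcos t).smul_const (N 0))).sub
      (((hsin t).div_const ω).smul_const (J 0))
    refine h.congr_deriv (Eq.symm ?_)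
    have e : Real.cos (ω * t) * ω / ω = Real.cos (ω * t) := by field_simp
    rw [e]
    module
  have hdu1 : ∀ t, HasDerivAt
      (fun s => J s + (ω * Real.sin (ω * s)) • N 0 - Real.cos (ω * s) • J 0)
      ((-(ω ^ 2)) • (N t - Real.cos (ω * t) • N 0 - (Real.sin (ω * t) / ω) • J 0)) t := by
    intro t
    have h := ((hdJ t).add (((hsin t).const_mul ω).smul_const (N 0))).sub
      ((hcos t).smul_const (J 0))
    refine h.congr_deriv (Eq.symm ?_)
    rw [hKeq t, smul_sub, smul_sub, smul_smul, smul_smul]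
    have s1 : -(ω ^ 2) * (Real.sin (ω * t) / ω) = -(Real.sin (ω * t) * ω) := by
      field_simp
    rw [s1]
    module
  have hdE : ∀ t, HasDerivAt (fun s : ℝ =>
      ω ^ 2 * (inner ℝ (N s - Real.cos (ω * s) • N 0 - (Real.sin (ω * s) / ω) • J 0)
        (N s - Real.cos (ω * s) • N 0 - (Real.sin (ω * s) / ω) • J 0) : ℝ)
      + (inner ℝ (J s + (ω * Real.sin (ω * s)) • N 0 - Real.cos (ω * s) • J 0)
        (J s + (ω * Real.sin (ω * s)) • N 0 - Real.cos (ω * s) • J 0) : ℝ)) 0 t := by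
    intro t
    have h := ((HasDerivAt.inner ℝ (hdu t) (hdu t)).const_mul (ω ^ 2)).add
      (HasDerivAt.inner ℝ (hdu1 t) (hdu1 t))
    refine h.congr_deriv (Eq.symm ?_)
    simp only [real_inner_smul_right, real_inner_smul_left]
    rw [real_inner_comm (J t + (ω * Real.sin (ω * t)) • N 0 - Real.cos (ω * t) • J 0)
      (N t - Real.cos (ω * t) • N 0 - (Real.sin (ω * t) / ω) • J 0)]
    ring
  have hEconst := is_const_of_deriv_eq_zero (f := fun s : ℝ =>
      ω ^ 2 * (inner ℝ (N s - Real.cos (ω * s) • N 0 - (Real.sin (ω * s) / ω) • J 0)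
        (N s - Real.cos (ω * s) • N 0 - (Real.sin (ω * s) / ω) • J 0) : ℝ)
      + (inner ℝ (J s + (ω * Real.sin (ω * s)) • N 0 - Real.cos (ω * s) • J 0)
        (J s + (ω * Real.sin (ω * s)) • N 0 - Real.cos (ω * s) • J 0) : ℝ))
    (fun s => (hdE s).differentiableAt) (fun s => (hdE s).deriv)
  have huzero : ∀ t, N t - Real.cos (ω * t) • N 0 - (Real.sin (ω * t) / ω) • J 0 = 0 := by
    intro t
    have h := hEconst t 0
    simp only [mul_zero, Real.cos_zero, Real.sin_zero, zero_div, one_smul, zero_smul,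
      sub_zero, sub_self, inner_zero_left, mul_zero, add_zero, zero_add] at h
    set y := N t - Real.cos (ω * t) • N 0 - (Real.sin (ω * t) / ω) • J 0 with hy
    set z := J t + (ω * Real.sin (ω * t)) • N 0 - Real.cos (ω * t) • J 0 with hz
    have h1 : (0:ℝ) ≤ inner ℝ y y := real_inner_self_nonneg
    have h2 : (0:ℝ) ≤ inner ℝ z z := real_inner_self_nonneg
    have h3 : (inner ℝ y y : ℝ) = 0 := by nlinarith [hωpos]
    exact inner_self_eq_zero.1 h3
  have hNf : ∀ t, N t = Real.cos (ω * t) • N 0 + (Real.sin (ω * t) / ω) • J 0 := by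
    intro t
    have h := huzero t
    linear_combination (norm := module) h
  -- integrate once : formula for T
  have hdv : ∀ t, HasDerivAt
      (fun s => T s - (Real.sin (ω * s) / ω) • N 0 - ((1 - Real.cos (ω * s)) / ω ^ 2) • J 0)
      0 t := by
    intro t
    have h := ((hdT t).sub (((hsin t).div_const ω).smul_const (N 0))).sub
      ((((hasDerivAt_const t (1:ℝ)).sub (hcos t)).div_const (ω ^ 2)).smul_const (J 0))
    refine h.congr_deriv (Eq.symm ?_)
    have e1 : Real.cos (ω * t) * ω / ω = Real.cos (ω * t) := by field_simp
    have e2 : ((0:ℝ) - -Real.sin (ω * t) * ω) / ω ^ 2 = Real.sin (ω * t) / ω := by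
      field_simp; ring
    rw [e1, e2, hNf t]
    module
  have hTconst := is_const_of_deriv_eq_zero
    (f := fun s => T s - (Real.sin (ω * s) / ω) • N 0 - ((1 - Real.cos (ω * s)) / ω ^ 2) • J 0)
    (fun s => (hdv s).differentiableAt) (fun s => (hdv s).deriv)
  have hTf : ∀ t, T t = T 0 + (Real.sin (ω * t) / ω) • N 0
      + ((1 - Real.cos (ω * t)) / ω ^ 2) • J 0 := by
    intro t
    have h := hTconst t 0
    simp only [mul_zero, Real.cos_zero, Real.sin_zero, zero_div, zero_smul, sub_self,
      sub_zero, one_smul] at h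
    linear_combination (norm := module) h
  -- integrate twice : formula for γ
  have hdw : ∀ t, HasDerivAt
      (fun s => γ s - s • T 0 - ((1 - Real.cos (ω * s)) / ω ^ 2) • N 0
        - ((s - Real.sin (ω * s) / ω) / ω ^ 2) • J 0) 0 t := by
    intro t
    have h := (((hdγ t).sub ((hasDerivAt_id t).smul_const (T 0))).sub
      ((((hasDerivAt_const t (1:ℝ)).sub (hcos t)).div_const (ω ^ 2)).smul_const (N 0))).sub
      ((((hasDerivAt_id t).sub ((hsin t).div_const ω)).div_const (ω ^ 2)).smul_const (J 0))
    refine h.congr_deriv (Eq.symm ?_)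
    have e2 : ((0:ℝ) - -Real.sin (ω * t) * ω) / ω ^ 2 = Real.sin (ω * t) / ω := by
      field_simp; ring
    have e3 : ((1:ℝ) - Real.cos (ω * t) * ω / ω) / ω ^ 2 = (1 - Real.cos (ω * t)) / ω ^ 2 := by
      rw [mul_div_assoc, div_self hωne, mul_one]
    rw [e2, e3, hTf t]
    module
  have hγconst := is_const_of_deriv_eq_zero
    (f := fun s => γ s - s • T 0 - ((1 - Real.cos (ω * s)) / ω ^ 2) • N 0
        - ((s - Real.sin (ω * s) / ω) / ω ^ 2) • J 0)
    (fun s => (hdw s).differentiableAt) (fun s => (hdw s).deriv)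
  have hγf : ∀ t, γ t = γ 0 + t • T 0 + ((1 - Real.cos (ω * t)) / ω ^ 2) • N 0
      + ((t - Real.sin (ω * t) / ω) / ω ^ 2) • J 0 := by
    intro t
    have h := hγconst t 0
    simp only [mul_zero, Real.cos_zero, Real.sin_zero, zero_div, zero_smul, sub_self,
      sub_zero, zero_sub, one_smul, neg_zero] at h
    linear_combination (norm := module) h
  -- periodicity
  have hγl : γ l = γ 0 := by simpa using hper 0
  have hperiod : l • T 0 + ((1 - Real.cos (ω * l)) / ω ^ 2) • N 0
      + ((l - Real.sin (ω * l) / ω) / ω ^ 2) • J 0 = 0 := by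
    have h := hγf l
    rw [hγl] at h
    linear_combination (norm := module) h.symm
  have hωne2 : ω ^ 2 ≠ 0 := pow_ne_zero 2 hωne
  have hcosl : Real.cos (ω * l) = 1 := by
    have h := congrArg (fun y : R3 => (inner ℝ y (N 0) : ℝ)) hperiod
    simp only [inner_add_left, real_inner_smul_left, inner_zero_left] at h
    rw [iTN 0, iNN 0, iJN 0] at h
    have h' : (1 - Real.cos (ω * l)) * κ₀ ^ 2 = 0 := by
      field_simp at h
      exact (mul_eq_zero.1 (by rw [mul_comm l ω] at h; linear_combination h : ω * ((1 - Real.cos (ω * l)) * κ₀ ^ 2) = 0)).resolve_left hωne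
    rcases mul_eq_zero.1 h' with h'' | h''
    · linarith
    · exact absurd h'' (ne_of_gt hκ2)
  have hsinl : Real.sin (ω * l) = 0 := by
    have h := Real.sin_sq_add_cos_sq (ω * l)
    rw [hcosl] at h
    have h2 : Real.sin (ω * l) ^ 2 = 0 := by nlinarith
    exact (pow_eq_zero_iff two_ne_zero).1 h2
  have hc0 : c₀ = 0 := by
    have h := congrArg (fun y : R3 => (inner ℝ y (cross3 (T 0) (N 0)) : ℝ)) hperiod
    simp only [inner_add_left, real_inner_smul_left, inner_zero_left] at h
    rw [inner_cross3_left, inner_cross3_right, inner_cross3, hτ 0, hsinl] at h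
    have h' : l * c₀ = 0 := by
      field_simp at h
      exact (mul_eq_zero.1 (by linear_combination h : l * c₀ * ω = 0)).resolve_right hωne
    rcases mul_eq_zero.1 h' with h'' | h''
    · exact absurd h'' (ne_of_gt hl)
    · exact h''
  -- ω = κ₀
  have hωκ : ω = κ₀ := by
    rw [hωdef, hc0]
    norm_num
    exact Real.sqrt_sq hκ₀.le
  have hκne : κ₀ ≠ 0 := ne_of_gt hκ₀
  have hJ0 : J 0 = (-(κ₀ ^ 2)) • T 0 := by
    have h := hJexp 0
    rw [hc0, zero_smul, add_zero] at h
    have h2 := congrArg (fun y : R3 => (κ₀ ^ 2)⁻¹ • y) h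
    simp only [smul_smul] at h2
    rw [inv_mul_cancel₀ (ne_of_gt hκ2), one_smul] at h2
    have e : (κ₀ ^ 2)⁻¹ * -κ₀ ^ 4 = -(κ₀ ^ 2) := by field_simp
    rw [e] at h2
    exact h2
  have hγcirc : ∀ t, γ t = γ 0 + (Real.sin (κ₀ * t) / κ₀) • T 0
      + ((1 - Real.cos (κ₀ * t)) / κ₀ ^ 2) • N 0 := by
    intro t
    have h := hγf t
    rw [hωκ, hJ0] at h
    rw [h]
    have e : ((t - Real.sin (κ₀ * t) / κ₀) / κ₀ ^ 2) • ((-(κ₀ ^ 2)) • T 0)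
        = (Real.sin (κ₀ * t) / κ₀ - t) • T 0 := by
      rw [smul_smul]; congr 1; field_simp; ring
    rw [e]
    module
  -- the circle
  have iXX : (inner ℝ (cross3 (T 0) (N 0)) (cross3 (T 0) (N 0)) : ℝ) = κ₀ ^ 2 := by
    rw [inner_cross3, det3_cross, iTT 0, iNN 0, iTN 0]; ring
  have hX0 : cross3 (T 0) (N 0) ≠ 0 := by
    intro h
    rw [h, inner_zero_left] at iXX
    exact absurd iXX.symm (ne_of_gt hκ2)
  refine ⟨hc0, γ 0 + (κ₀ ^ 2)⁻¹ • N 0, cross3 (T 0) (N 0), κ₀⁻¹, hX0, by positivity, ?_⟩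
  ext x
  simp only [Set.mem_range, Set.mem_setOf_eq]
  constructor
  · rintro ⟨t, rfl⟩
    have hy : γ t - (γ 0 + (κ₀ ^ 2)⁻¹ • N 0) = (Real.sin (κ₀ * t) / κ₀) • T 0
        + (-Real.cos (κ₀ * t) / κ₀ ^ 2) • N 0 := by
      rw [hγcirc t]; module
    constructor
    · rw [hy]
      simp only [inner_add_left, real_inner_smul_left, inner_cross3_left, inner_cross3_right]
      ring
    · have h2 : ‖γ t - (γ 0 + (κ₀ ^ 2)⁻¹ • N 0)‖ ^ 2 = (κ₀⁻¹) ^ 2 := by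
        rw [← real_inner_self_eq_norm_sq, hy]
        simp only [inner_add_left, inner_add_right, real_inner_smul_left,
          real_inner_smul_right]
        rw [iTT 0, iNN 0, iTN 0, iNT 0]
        have hpc := Real.sin_sq_add_cos_sq (κ₀ * t)
        field_simp
        linear_combination κ₀ * hpc
      have h3 : (0:ℝ) ≤ ‖γ t - (γ 0 + (κ₀ ^ 2)⁻¹ • N 0)‖ := norm_nonneg _
      nlinarith [inv_pos.2 hκ₀]
  · rintro ⟨hx1, hx2⟩
    have hyd := key3 (T 0) (N 0) (x - (γ 0 + (κ₀ ^ 2)⁻¹ • N 0))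
    rw [iTT 0, iNN 0, iTN 0] at hyd
    have hdet : det3 (T 0) (N 0) (x - (γ 0 + (κ₀ ^ 2)⁻¹ • N 0)) = 0 := by
      rw [← inner_cross3]; exact hx1
    rw [hdet, zero_smul, add_zero] at hyd
    set a : ℝ := inner ℝ (x - (γ 0 + (κ₀ ^ 2)⁻¹ • N 0)) (T 0) with hadef
    set b : ℝ := inner ℝ (x - (γ 0 + (κ₀ ^ 2)⁻¹ • N 0)) (N 0) with hbdef
    have hyy : (inner ℝ (x - (γ 0 + (κ₀ ^ 2)⁻¹ • N 0)) (x - (γ 0 + (κ₀ ^ 2)⁻¹ • N 0)) : ℝ)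
        = (κ₀⁻¹) ^ 2 := by rw [real_inner_self_eq_norm_sq, hx2]
    -- simplify hyd coefficients
    rw [show ((1:ℝ) * κ₀ ^ 2 - 0 * 0) = κ₀ ^ 2 by ring,
      show (a * κ₀ ^ 2 - b * 0) = a * κ₀ ^ 2 by ring,
      show (b * 1 - a * 0) = b by ring] at hyd
    have hyexp : x - (γ 0 + (κ₀ ^ 2)⁻¹ • N 0) = a • T 0 + (b / κ₀ ^ 2) • N 0 := by
      have h2 := congrArg (fun v : R3 => (κ₀ ^ 2)⁻¹ • v) hyd
      simp only [smul_smul, smul_add] at h2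
      rw [inv_mul_cancel₀ (ne_of_gt hκ2), one_smul] at h2
      rw [show (κ₀ ^ 2)⁻¹ * (a * κ₀ ^ 2) = a by field_simp,
        show (κ₀ ^ 2)⁻¹ * b = b / κ₀ ^ 2 by ring] at h2
      exact h2
    have hab : (κ₀ * a) ^ 2 + (-b) ^ 2 = 1 := by
      have h3 := congrArg
        (fun v : R3 => (inner ℝ (x - (γ 0 + (κ₀ ^ 2)⁻¹ • N 0)) v : ℝ)) hyd
      simp only [real_inner_smul_right, inner_add_right] at h3
      rw [← hadef, ← hbdef, hyy] at h3
      have h4 : κ₀ ^ 2 * κ₀⁻¹ ^ 2 = (1:ℝ) := by field_simp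
      rw [h4] at h3
      linear_combination -h3
    obtain ⟨θ, hcθ, hsθ⟩ := exists_cos_sin (-b) (κ₀ * a) (by linear_combination hab)
    refine ⟨θ / κ₀, ?_⟩
    rw [hγcirc (θ / κ₀), show κ₀ * (θ / κ₀) = θ by field_simp, hsθ, hcθ]
    have hxeq : x = (γ 0 + (κ₀ ^ 2)⁻¹ • N 0) + (a • T 0 + (b / κ₀ ^ 2) • N 0) := by
      rw [← hyexp]; abel
    rw [hxeq, show κ₀ * a / κ₀ = a by field_simp]
    module
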